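/- The choice command 'or' is a derived command: let C be a program such that from every graph G, C can both succeed and fail, i.e. for every graph G there exists a graph H with ⟨C,G⟩ →⁺ H, and also ⟨C,G⟩ →⁺ fail (this holds for the program C = remove!; {create, null}; zero of the paper). Then for all programs P and Q, P or Q ≡ if C then P else Q. -/
import Mathlib


/-- GP 2 abstract program syntax over a type `R` of rule-set calls. -/
inductive Prog (R : Type) : Type where
  | call  : R → Prog R                               -- rule-set call
  | seq   : Prog R → Prog R → Prog R                 -- P;Q
  | ite   : Prog R → Prog R → Prog R → Prog R        -- if C then P else Q
  | tryte : Prog R → Prog R → Prog R → Prog R        -- try C then P else Q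
  | if1   : Prog R → Prog R → Prog R                 -- if C then P
  | try1  : Prog R → Prog R → Prog R                 -- try C then P
  | alap  : Prog R → Prog R                          -- P!
  | or    : Prog R → Prog R → Prog R                 -- P or Q
  | skip  : Prog R
  | fail  : Prog R

/-- Configurations: an unfinished computation ⟨P,G⟩, a proper result G, or failure. -/
inductive Config (R Graph : Type) : Type where
  | run    : Prog R → Graph → Config R Graph
  | result : Graph → Config R Graph
  | fail   : Config R Graph

mutual
/-- The small-step transition relation → of GP 2, relative to the
    rule-set application relation `apply` (G ⇒_R H). -/
inductive Step {R Graph : Type} (apply : R → Graph → Graph → Prop) :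
    Config R Graph → Config R Graph → Prop where
  | call₁ {r G H} : apply r G H → Step apply (.run (.call r) G) (.result H)
  | call₂ {r G} : (∀ H, ¬ apply r G H) → Step apply (.run (.call r) G) .fail
  | seq₁ {P Q P' G H} : Step apply (.run P G) (.run P' H) →
      Step apply (.run (.seq P Q) G) (.run (.seq P' Q) H)
  | seq₂ {P Q G H} : Step apply (.run P G) (.result H) →
      Step apply (.run (.seq P Q) G) (.run Q H)
  | seq₃ {P Q G} : Step apply (.run P G) .fail →
      Step apply (.run (.seq P Q) G) .fail
  | if₁ {C P Q G H} : StepPlus apply (.run C G) (.result H) →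
      Step apply (.run (.ite C P Q) G) (.run P G)
  | if₂ {C P Q G} : StepPlus apply (.run C G) .fail →
      Step apply (.run (.ite C P Q) G) (.run Q G)
  | try₁ {C P Q G H} : StepPlus apply (.run C G) (.result H) →
      Step apply (.run (.tryte C P Q) G) (.run P H)
  | try₂ {C P Q G} : StepPlus apply (.run C G) .fail →
      Step apply (.run (.tryte C P Q) G) (.run Q G)
  | alap₁ {P G H} : StepPlus apply (.run P G) (.result H) →
      Step apply (.run (.alap P) G) (.run (.alap P) H)
  | alap₂ {P G} : StepPlus apply (.run P G) .fail →
      Step apply (.run (.alap P) G) (.result G)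
  | or₁ {P Q G} : Step apply (.run (.or P Q) G) (.run P G)
  | or₂ {P Q G} : Step apply (.run (.or P Q) G) (.run Q G)
  | skip {G} : Step apply (.run .skip G) (.result G)
  | fail {G} : Step apply (.run .fail G) .fail
  | if₃ {C P G H} : StepPlus apply (.run C G) (.result H) →
      Step apply (.run (.if1 C P) G) (.run P G)
  | if₄ {C P G} : StepPlus apply (.run C G) .fail →
      Step apply (.run (.if1 C P) G) (.result G)
  | try₃ {C P G H} : StepPlus apply (.run C G) (.result H) →
      Step apply (.run (.try1 C P) G) (.run P H)
  | try₄ {C P G} : StepPlus apply (.run C G) .fail →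
      Step apply (.run (.try1 C P) G) (.result G)

/-- The transitive closure →⁺ of the small-step relation. -/
inductive StepPlus {R Graph : Type} (apply : R → Graph → Graph → Prop) :
    Config R Graph → Config R Graph → Prop where
  | single {γ δ} : Step apply γ δ → StepPlus apply γ δ
  | tail {γ δ ε} : StepPlus apply γ δ → Step apply δ ε → StepPlus apply γ ε
end

/-- `P` can diverge from `G`: there is an infinite →-sequence from ⟨P,G⟩. -/
def CanDiverge {R Graph : Type} (apply : R → Graph → Graph → Prop)
    (P : Prog R) (G : Graph) : Prop :=
  ∃ f : ℕ → Config R Graph, f 0 = .run P G ∧ ∀ n, Step apply (f n) (f (n + 1))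

/-- `P` can get stuck from `G`: some terminal configuration ⟨Q,H⟩ is reachable (→*) from ⟨P,G⟩. -/
def CanGetStuck {R Graph : Type} (apply : R → Graph → Graph → Prop)
    (P : Prog R) (G : Graph) : Prop :=
  ∃ Q H, Relation.ReflTransGen (Step apply) (.run P G) (.run Q H) ∧
    ∀ δ, ¬ Step apply (.run Q H) δ

/-- Possible outcomes of a program run: a proper result graph, failure, or ⊥. -/
inductive SemVal (Graph : Type) : Type where
  | graph : Graph → SemVal Graph
  | fail  : SemVal Graph
  | bot   : SemVal Graph

/-- The semantic function: `Sem apply P G` is the set of all possible results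
    of executing `P` on `G`. -/
def Sem {R Graph : Type} (apply : R → Graph → Graph → Prop)
    (P : Prog R) (G : Graph) : Set (SemVal Graph) :=
  fun X => match X with
    | .graph H => StepPlus apply (.run P G) (.result H)
    | .fail => StepPlus apply (.run P G) .fail
    | .bot => CanDiverge apply P G ∨ CanGetStuck apply P G

/-- Semantic equivalence of programs. -/
def ProgEquiv {R Graph : Type} (apply : R → Graph → Graph → Prop)
    (P Q : Prog R) : Prop :=
  ∀ G, Sem apply P G = Sem apply Q G


section Aux
variable {R Graph : Type} {apply : R → Graph → Graph → Prop}

lemma stepPlus_ind {motive : Config R Graph → Config R Graph → Prop}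
    (hsingle : ∀ {γ δ}, Step apply γ δ → motive γ δ)
    (htail : ∀ {γ δ ε}, StepPlus apply γ δ → motive γ δ → Step apply δ ε → motive γ ε)
    (γ δ) (h : StepPlus apply γ δ) : motive γ δ := by
  apply StepPlus.rec (apply := apply) (motive_1 := fun _ _ _ => True)
    (motive_2 := fun γ' δ' _ => motive γ' δ') (t := h) <;> intros <;> try trivial
  case single => apply hsingle; assumption
  case tail => apply htail <;> assumption

lemma stepPlus_head_decomp {γ ε : Config R Graph}
    (h : StepPlus apply γ ε) :
    ∃ δ, Step apply γ δ ∧ (δ = ε ∨ StepPlus apply δ ε)  := by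
  refine stepPlus_ind (motive := fun γ ε => ∃ δ, Step apply γ δ ∧ (δ = ε ∨ StepPlus apply δ ε))
    ?_ ?_ _ _ h
  · intro γ δ h
    exact ⟨_, h, Or.inl rfl⟩
  · intro γ δ ε h₁ ih h₂
    obtain ⟨δ, hs, hrest⟩ := ih
    refine ⟨_, hs, Or.inr ?_⟩
    cases hrest with
    | inl h => subst h; exact .single h₂
    | inr h => exact .tail h h₂

lemma step_stepPlus {γ δ ε : Config R Graph}
    (h₁ : Step apply γ δ) (h₂ : StepPlus apply δ ε) : StepPlus apply γ ε := by
  refine stepPlus_ind (motive := fun δ' ε => Step apply γ δ' → StepPlus apply γ ε)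
    ?_ ?_ _ _ h₂ h₁
  · intro _ _ h hs
    exact .tail (.single hs) h
  · intro _ _ _ _ ih h hs
    exact .tail (ih hs) h

lemma or_head {P Q : Prog R} {G : Graph} {δ : Config R Graph}
    (h : Step apply (.run (.or P Q) G) δ) :
    δ = .run P G ∨ δ = .run Q G := by
  cases h
  · exact Or.inl rfl
  · exact Or.inr rfl

lemma ite_head {C P Q : Prog R} {G : Graph} {δ : Config R Graph}
    (h : Step apply (.run (.ite C P Q) G) δ) :
    δ = .run P G ∨ δ = .run Q G := by
  cases h
  · exact Or.inl rfl
  · exact Or.inr rfl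

end Aux

/-- if from every graph G the program C can both succeed
    (⟨C,G⟩ →⁺ H for some graph H) and fail (⟨C,G⟩ →⁺ fail), then for all
    programs P and Q, P or Q ≡ if C then P else Q. -/
theorem or_derived {R Graph : Type}
    (apply : R → Graph → Graph → Prop) (C : Prog R)
    (hsucc : ∀ G : Graph, ∃ H, StepPlus apply (.run C G) (.result H))
    (hfail : ∀ G : Graph, StepPlus apply (.run C G) .fail) :
    ∀ P Q : Prog R, ProgEquiv apply (Prog.or P Q) (Prog.ite C P Q) := by
  intro P Q G
  have horstep : Step apply (.run (.or P Q) G) (.run P G) := .or₁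
  obtain ⟨H0, hH0⟩ := hsucc G
  have hitestep : Step apply (.run (.ite C P Q) G) (.run P G) := .if₁ hH0
  have hitestep2 : Step apply (.run (.ite C P Q) G) (.run Q G) := .if₂ (hfail G)
  -- reachable X from or/ite iff from P or from Q, for X result/fail
  have key : ∀ X : Config R Graph, (∀ P' H', X ≠ .run P' H') →
      (StepPlus apply (.run (.or P Q) G) X ↔ StepPlus apply (.run (.ite C P Q) G) X) := by
    intro X hX
    constructor
    · intro h
      obtain ⟨δ, hs, hrest⟩ := stepPlus_head_decomp h
      rcases or_head hs with h1 | h1 <;> subst h1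
      · rcases hrest with h2 | h2
        · exact absurd h2.symm (hX _ _)
        · exact step_stepPlus hitestep h2
      · rcases hrest with h2 | h2
        · exact absurd h2.symm (hX _ _)
        · exact step_stepPlus hitestep2 h2
    · intro h
      obtain ⟨δ, hs, hrest⟩ := stepPlus_head_decomp h
      rcases ite_head hs with h1 | h1 <;> subst h1
      · rcases hrest with h2 | h2
        · exact absurd h2.symm (hX _ _)
        · exact step_stepPlus horstep h2
      · rcases hrest with h2 | h2
        · exact absurd h2.symm (hX _ _)
        · exact step_stepPlus Step.or₂ h2
  ext X
  cases X with
  | graph H => exact key (.result H) (by intro _ _ h; cases h)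
  | fail => exact key .fail (by intro _ _ h; cases h)
  | bot =>
    -- bottom: divergence or stuck
    have div : CanDiverge apply (.or P Q) G ↔ CanDiverge apply (.ite C P Q) G := by
      constructor
      · rintro ⟨f, hf0, hf⟩
        refine ⟨fun n => if n = 0 then .run (.ite C P Q) G else f n, by simp, ?_⟩
        intro n
        cases n with
        | zero =>
          simp only [if_pos rfl, Nat.zero_add, if_neg (Nat.one_ne_zero)]
          have := hf 0
          rw [hf0] at this
          rcases or_head this with h | h <;> rw [h]
          · exact hitestep
          · exact hitestep2
        | succ n => simpa using hf (n+1)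
      · rintro ⟨f, hf0, hf⟩
        refine ⟨fun n => if n = 0 then .run (.or P Q) G else f n, by simp, ?_⟩
        intro n
        cases n with
        | zero =>
          simp only [if_pos rfl, Nat.zero_add, if_neg (Nat.one_ne_zero)]
          have := hf 0
          rw [hf0] at this
          rcases ite_head this with h | h <;> rw [h]
          · exact horstep
          · exact Step.or₂
        | succ n => simpa using hf (n+1)
    have stuck : CanGetStuck apply (.or P Q) G ↔ CanGetStuck apply (.ite C P Q) G := by
      constructor
      · rintro ⟨Q', H', hr, hterm⟩
        rcases Relation.ReflTransGen.cases_head hr with h | ⟨δ, hs, hrest⟩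
        · injection h with h1 h2
          subst h1; subst h2
          exact absurd horstep (hterm _)
        · rcases or_head hs with h | h <;> subst h
          · exact ⟨Q', H', Relation.ReflTransGen.head hitestep hrest, hterm⟩
          · exact ⟨Q', H', Relation.ReflTransGen.head hitestep2 hrest, hterm⟩
      · rintro ⟨Q', H', hr, hterm⟩
        rcases Relation.ReflTransGen.cases_head hr with h | ⟨δ, hs, hrest⟩
        · injection h with h1 h2
          subst h1; subst h2
          exact absurd hitestep (hterm _)
        · rcases ite_head hs with h | h <;> subst h
          · exact ⟨Q', H', Relation.ReflTransGen.head horstep hrest, hterm⟩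
          · exact ⟨Q', H', Relation.ReflTransGen.head Step.or₂ hrest, hterm⟩
    show (CanDiverge apply (.or P Q) G ∨ CanGetStuck apply (.or P Q) G) ↔ _
    rw [div, stuck]
    rfl
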